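/- In the RURV setting (exact arithmetic), suppose σ_{r+1} < f·σ_r, where f = σ_min(X₁₁) and X₁₁ = X(1:r,1:r) (so in particular σ_r > 0 and f > 0). Then the trailing (n−r)×(n−r) block of R satisfies σ_{r+1} ≤ σ_max(R(r+1:n, r+1:n)) ≤ 3·σ_{r+1} · f⁻⁴·(σ₁/σ_r)³ / (1 − σ_{r+1}²/(f²·σ_r²)). -/
import Mathlib


open Matrix

/-- The Euclidean norm of a real vector. -/
noncomputable def euclNorm {n : Type*} [Fintype n] (v : n → ℝ) : ℝ :=
  Real.sqrt (v ⬝ᵥ v)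

/-- The smallest singular value of a real matrix: the infimum of `‖M·x‖₂` over
Euclidean-unit vectors `x`. -/
noncomputable def sigmaMin {m n : Type*} [Fintype m] [Fintype n]
    (M : Matrix m n ℝ) : ℝ :=
  sInf {t | ∃ x : n → ℝ, euclNorm x = 1 ∧ t = euclNorm (M *ᵥ x)}

/-- The largest singular value (ℓ² operator norm) of a real matrix: the supremum
of `‖M·x‖₂` over Euclidean-unit vectors `x`. -/
noncomputable def sigmaMax {m n : Type*} [Fintype m] [Fintype n]
    (M : Matrix m n ℝ) : ℝ :=
  sSup {t | ∃ x : n → ℝ, euclNorm x = 1 ∧ t = euclNorm (M *ᵥ x)}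

namespace RURV

variable {m k l : Type*} [Fintype m] [Fintype k] [Fintype l]

lemma euclNorm_eq (v : m → ℝ) : euclNorm v = Real.sqrt (∑ i, v i ^ 2) := by
  simp [euclNorm, dotProduct, sq]

lemma euclNorm_nonneg (v : m → ℝ) : 0 ≤ euclNorm v := Real.sqrt_nonneg _

lemma euclNorm_zero : euclNorm (0 : m → ℝ) = 0 := by simp [euclNorm_eq]

lemma sq_euclNorm (v : m → ℝ) : euclNorm v ^ 2 = ∑ i, v i ^ 2 := by
  rw [euclNorm_eq, Real.sq_sqrt]
  exact Finset.sum_nonneg fun i _ => sq_nonneg _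

lemma euclNorm_pos {v : m → ℝ} (hv : v ≠ 0) : 0 < euclNorm v := by
  rw [euclNorm_eq]
  apply Real.sqrt_pos.2
  rcases Function.ne_iff.1 hv with ⟨i, hi⟩
  have h1 : (0:ℝ) < v i ^ 2 := lt_of_le_of_ne (sq_nonneg _) (Ne.symm (pow_ne_zero 2 hi))
  have h2 : ∑ j, v j ^ 2 ≥ v i ^ 2 :=
    Finset.single_le_sum (fun j _ => sq_nonneg (v j)) (Finset.mem_univ i)
  linarith

lemma euclNorm_smul (c : ℝ) (v : m → ℝ) : euclNorm (c • v) = |c| * euclNorm v := by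
  rw [euclNorm_eq, euclNorm_eq]
  have : ∑ i, (c • v) i ^ 2 = c ^ 2 * ∑ i, v i ^ 2 := by
    rw [Finset.mul_sum]; apply Finset.sum_congr rfl; intro i _; simp [mul_pow]
  rw [this, Real.sqrt_mul (sq_nonneg c), Real.sqrt_sq_eq_abs]

lemma euclNorm_add_le (u v : m → ℝ) : euclNorm (u + v) ≤ euclNorm u + euclNorm v := by
  have h1 : ∑ i, u i * v i ≤ euclNorm u * euclNorm v := by
    have hcs := Finset.sum_mul_sq_le_sq_mul_sq Finset.univ u v
    have h2 : euclNorm u * euclNorm v = Real.sqrt ((∑ i, u i ^ 2) * ∑ i, v i ^ 2) := by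
      rw [euclNorm_eq, euclNorm_eq, Real.sqrt_mul]
      exact Finset.sum_nonneg fun i _ => sq_nonneg _
    rw [h2]
    calc ∑ i, u i * v i ≤ |∑ i, u i * v i| := le_abs_self _
      _ = Real.sqrt ((∑ i, u i * v i) ^ 2) := (Real.sqrt_sq_eq_abs _).symm
      _ ≤ _ := Real.sqrt_le_sqrt hcs
  have hu := euclNorm_nonneg u
  have hv := euclNorm_nonneg v
  rw [euclNorm_eq]
  have : ∑ i, (u + v) i ^ 2 ≤ (euclNorm u + euclNorm v) ^ 2 := by
    have hu2 := sq_euclNorm u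
    have hv2 := sq_euclNorm v
    have he : ∑ i, (u + v) i ^ 2 = (∑ i, u i ^ 2) + 2 * (∑ i, u i * v i) + ∑ i, v i ^ 2 := by
      have h3 : ∀ i : m, (u + v) i ^ 2 = u i ^ 2 + (2 * (u i * v i) + v i ^ 2) := by
        intro i; simp [Pi.add_apply]; ring
      rw [Finset.sum_congr rfl fun i _ => h3 i, Finset.sum_add_distrib,
        Finset.sum_add_distrib, Finset.mul_sum]
      ring
    rw [he]; nlinarith
  calc Real.sqrt (∑ i, (u + v) i ^ 2) ≤ Real.sqrt ((euclNorm u + euclNorm v) ^ 2) :=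
        Real.sqrt_le_sqrt this
    _ = euclNorm u + euclNorm v := Real.sqrt_sq (by linarith)

lemma euclNorm_neg (v : m → ℝ) : euclNorm (-v) = euclNorm v := by
  simp [euclNorm_eq]

lemma euclNorm_sub_le (u v : m → ℝ) : euclNorm (u - v) ≤ euclNorm u + euclNorm v := by
  rw [sub_eq_add_neg]
  calc euclNorm (u + -v) ≤ euclNorm u + euclNorm (-v) := euclNorm_add_le u (-v)
    _ = _ := by rw [euclNorm_neg]

lemma euclNorm_unit [DecidableEq m] (i : m) :
    euclNorm (fun j => if j = i then (1:ℝ) else 0) = 1 := by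
  rw [euclNorm_eq]
  have h : ∑ j, (if j = i then (1:ℝ) else 0) ^ 2 = 1 := by
    rw [Finset.sum_eq_single i] <;> simp +contextual
  rw [h, Real.sqrt_one]

lemma euclNorm_comp_le [DecidableEq m] {f : k → m} (hf : Function.Injective f) (v : m → ℝ) :
    euclNorm (v ∘ f) ≤ euclNorm v := by
  rw [euclNorm_eq, euclNorm_eq]
  apply Real.sqrt_le_sqrt
  calc ∑ i, (v ∘ f) i ^ 2 = ∑ j ∈ Finset.univ.image f, v j ^ 2 := by
        rw [Finset.sum_image (fun a _ b _ h => hf h)]; rfl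
    _ ≤ ∑ j, v j ^ 2 :=
        Finset.sum_le_sum_of_subset_of_nonneg (Finset.subset_univ _)
          (fun j _ _ => sq_nonneg _)

lemma euclNorm_mulVec_orth [DecidableEq k] {M : Matrix m k ℝ} (h : Mᵀ * M = 1) (x : k → ℝ) :
    euclNorm (M *ᵥ x) = euclNorm x := by
  unfold euclNorm
  congr 1
  rw [dotProduct_mulVec, vecMul_mulVec, h, vecMul_one]


lemma bddAbove_setS (M : Matrix m k ℝ) :
    BddAbove {t | ∃ x : k → ℝ, euclNorm x = 1 ∧ t = euclNorm (M *ᵥ x)} := by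
  refine ⟨Real.sqrt (∑ i, ∑ j, M i j ^ 2), ?_⟩
  rintro t ⟨x, hx, rfl⟩
  rw [euclNorm_eq]
  apply Real.sqrt_le_sqrt
  have hx2 : ∑ j, x j ^ 2 = 1 := by rw [← sq_euclNorm, hx]; norm_num
  apply Finset.sum_le_sum
  intro i _
  calc (M *ᵥ x) i ^ 2 = (∑ j, M i j * x j) ^ 2 := rfl
    _ ≤ (∑ j, M i j ^ 2) * ∑ j, x j ^ 2 := Finset.sum_mul_sq_le_sq_mul_sq _ _ _
    _ = ∑ j, M i j ^ 2 := by rw [hx2, mul_one]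

lemma le_sigmaMax (M : Matrix m k ℝ) {x : k → ℝ} (hx : euclNorm x = 1) :
    euclNorm (M *ᵥ x) ≤ sigmaMax M :=
  le_csSup (bddAbove_setS M) ⟨x, hx, rfl⟩

lemma setS_nonempty [Nonempty k] [DecidableEq k] (M : Matrix m k ℝ) :
    Set.Nonempty {t | ∃ x : k → ℝ, euclNorm x = 1 ∧ t = euclNorm (M *ᵥ x)} := by
  refine ⟨euclNorm (M *ᵥ fun j => if j = Classical.arbitrary k then (1:ℝ) else 0), ?_⟩
  exact ⟨_, euclNorm_unit _, rfl⟩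

lemma sigmaMax_le [Nonempty k] [DecidableEq k] (M : Matrix m k ℝ) {c : ℝ}
    (h : ∀ x : k → ℝ, euclNorm x = 1 → euclNorm (M *ᵥ x) ≤ c) : sigmaMax M ≤ c := by
  apply csSup_le (setS_nonempty M)
  rintro t ⟨x, hx, rfl⟩; exact h x hx

lemma sigmaMin_le (M : Matrix m k ℝ) {x : k → ℝ} (hx : euclNorm x = 1) :
    sigmaMin M ≤ euclNorm (M *ᵥ x) := by
  refine csInf_le ⟨0, ?_⟩ ?_
  · rintro t ⟨y, hy, rfl⟩; exact euclNorm_nonneg _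
  · exact ⟨x, hx, rfl⟩

lemma sigmaMin_nonneg [Nonempty k] [DecidableEq k] (M : Matrix m k ℝ) : 0 ≤ sigmaMin M := by
  apply le_csInf (setS_nonempty M)
  rintro t ⟨y, hy, rfl⟩; exact euclNorm_nonneg _

lemma sigmaMin_mulVec_le (M : Matrix m k ℝ) (x : k → ℝ) :
    sigmaMin M * euclNorm x ≤ euclNorm (M *ᵥ x) := by
  by_cases hx : x = 0
  · subst hx; simp [euclNorm_zero]
  · have hp : 0 < euclNorm x := euclNorm_pos hx
    have h1 : euclNorm ((euclNorm x)⁻¹ • x) = 1 := by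
      rw [euclNorm_smul, abs_of_pos (by positivity), inv_mul_cancel₀ hp.ne']
    have h2 := sigmaMin_le M h1
    rw [Matrix.mulVec_smul, euclNorm_smul, abs_of_pos (by positivity)] at h2
    calc sigmaMin M * euclNorm x ≤ ((euclNorm x)⁻¹ * euclNorm (M *ᵥ x)) * euclNorm x := by
          apply mul_le_mul_of_nonneg_right h2 hp.le
      _ = euclNorm (M *ᵥ x) := by field_simp

/-- Multiplying a vector by a (possibly rectangular) submatrix of a matrix with
orthonormal columns does not increase the Euclidean norm. -/
lemma euclNorm_submatrix_mulVec_le [DecidableEq m] [DecidableEq k] [DecidableEq l]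
    {j : Type*} [Fintype j] [DecidableEq j]
    {M : Matrix m k ℝ} (h : Mᵀ * M = 1) {f : l → m} {g : j → k}
    (hf : Function.Injective f) (hg : Function.Injective g) (x : j → ℝ) :
    euclNorm (M.submatrix f g *ᵥ x) ≤ euclNorm x := by
  set E : Matrix k j ℝ := (1 : Matrix k k ℝ).submatrix id g with hE
  have hEE : Eᵀ * E = 1 := by
    ext a b
    simp only [hE, Matrix.mul_apply, Matrix.transpose_apply, Matrix.submatrix_apply, id_eq,
      Matrix.one_apply]
    rw [Finset.sum_eq_single (g a)]
    · simp [hg.eq_iff]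
    · intro c _ hc; simp [Matrix.one_apply, hc]
    · simp
  have key : M.submatrix f g *ᵥ x = (M *ᵥ (E *ᵥ x)) ∘ f := by
    funext i
    show ∑ b, M (f i) (g b) * x b = ∑ p, M (f i) p * (∑ b, (1:Matrix k k ℝ) p (g b) * x b)
    have hps : ∀ p, M (f i) p * (∑ b, (1:Matrix k k ℝ) p (g b) * x b)
        = ∑ b, M (f i) p * ((1:Matrix k k ℝ) p (g b) * x b) := fun p => Finset.mul_sum _ _ _
    rw [Finset.sum_congr rfl fun p _ => hps p, Finset.sum_comm]
    apply Finset.sum_congr rfl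
    intro b _
    rw [Finset.sum_eq_single (g b)]
    · simp
    · intro c _ hc; simp [Matrix.one_apply, hc]
    · simp
  rw [key]
  calc euclNorm ((M *ᵥ (E *ᵥ x)) ∘ f) ≤ euclNorm (M *ᵥ (E *ᵥ x)) := euclNorm_comp_le hf _
    _ = euclNorm (E *ᵥ x) := euclNorm_mulVec_orth h _
    _ = euclNorm x := euclNorm_mulVec_orth hEE _


lemma euclNorm_diagonal_mulVec_le [DecidableEq m] {d : m → ℝ} {c : ℝ} (hc : 0 ≤ c)
    (h : ∀ i, |d i| ≤ c) (x : m → ℝ) :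
    euclNorm (diagonal d *ᵥ x) ≤ c * euclNorm x := by
  rw [euclNorm_eq, euclNorm_eq, ← Real.sqrt_sq hc, ← Real.sqrt_mul (sq_nonneg c)]
  apply Real.sqrt_le_sqrt
  rw [Finset.mul_sum]
  apply Finset.sum_le_sum
  intro i _
  rw [Matrix.mulVec_diagonal]
  have h1 : d i ^ 2 ≤ c ^ 2 := by
    rw [← sq_abs]; exact pow_le_pow_left₀ (abs_nonneg _) (h i) 2
  calc (d i * x i) ^ 2 = d i ^ 2 * x i ^ 2 := by ring
    _ ≤ c ^ 2 * x i ^ 2 := mul_le_mul_of_nonneg_right h1 (sq_nonneg _)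

lemma submatrix_mul_submatrix {j : Type*} [Fintype j] {l' : Type*}
    (M : Matrix m k ℝ) (N : Matrix k l ℝ) (f : j → m) (g : l' → l) :
    (M * N).submatrix f g = M.submatrix f id * N.submatrix id g := by
  ext i p
  simp [Matrix.mul_apply]

lemma fin_sum_split {n r : ℕ} (hrn : r ≤ n) (g : Fin n → ℝ) :
    ∑ x, g x = (∑ a : Fin r, g (Fin.castLE hrn a)) +
      ∑ b : Fin (n - r), g ⟨r + b.val, by omega⟩ := by
  have h : r + (n - r) = n := by omega
  rw [← Fintype.sum_equiv (finSumFinEquiv.trans (finCongr h))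
    (fun s => g ((finSumFinEquiv.trans (finCongr h)) s)) g (fun s => rfl),
    Fintype.sum_sum_type]
  congr 1
  all_goals exact Finset.sum_congr rfl fun a _ => by congr 1; apply Fin.ext; simp

end RURV

lemma arith_bound (s0 s1 s2 F t : ℝ) (hs1 : 0 ≤ s1) (h2pos : 0 < s2)
    (hgap : s1 < F * s2) (hFpos : 0 < F) (hF1 : F ≤ 1) (h02 : s2 ≤ s0)
    (ht : t ≤ s1 * (1 + F⁻¹)) :
    t ≤ 3 * s1 * (F⁻¹ ^ 4 * (s0 / s2) ^ 3) / (1 - s1 ^ 2 / (F ^ 2 * s2 ^ 2)) := by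
  have hfi1 : 1 ≤ F⁻¹ := by
    have h := mul_le_mul_of_nonneg_left hF1 (le_of_lt (inv_pos.2 hFpos))
    rwa [inv_mul_cancel₀ hFpos.ne', mul_one] at h
  have hfi4 : F⁻¹ ≤ F⁻¹ ^ 4 := le_self_pow₀ hfi1 (by norm_num)
  have hq1 : 1 ≤ s0 / s2 := by rw [le_div_iff₀ h2pos, one_mul]; exact h02
  have hq3 : 1 ≤ (s0 / s2) ^ 3 := one_le_pow₀ hq1
  have hsq : s1 ^ 2 < F ^ 2 * s2 ^ 2 := by nlinarith
  have hDpos : 0 < 1 - s1 ^ 2 / (F ^ 2 * s2 ^ 2) := by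
    have h := (div_lt_one (by positivity : (0:ℝ) < F ^ 2 * s2 ^ 2)).mpr hsq
    linarith
  have hDle : 1 - s1 ^ 2 / (F ^ 2 * s2 ^ 2) ≤ 1 := by
    have : 0 ≤ s1 ^ 2 / (F ^ 2 * s2 ^ 2) := by positivity
    linarith
  have hAB : F⁻¹ ≤ F⁻¹ ^ 4 * (s0 / s2) ^ 3 := by
    nlinarith [pow_nonneg (inv_nonneg.2 hFpos.le) 4]
  have hmid : s1 * (1 + F⁻¹) ≤ 3 * s1 * (F⁻¹ ^ 4 * (s0 / s2) ^ 3) := by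
    nlinarith [mul_le_mul_of_nonneg_left hAB hs1]
  have hnum : 0 ≤ 3 * s1 * (F⁻¹ ^ 4 * (s0 / s2) ^ 3) := by positivity
  have hfinal : 3 * s1 * (F⁻¹ ^ 4 * (s0 / s2) ^ 3) ≤
      3 * s1 * (F⁻¹ ^ 4 * (s0 / s2) ^ 3) / (1 - s1 ^ 2 / (F ^ 2 * s2 ^ 2)) := by
    rw [le_div_iff₀ hDpos]
    nlinarith [mul_le_mul_of_nonneg_left hDle hnum]
  linarith

open RURV

set_option maxHeartbeats 3200000 in
/-- RURV, exact arithmetic: with `A = P·Σ·Qᵀ` an SVD, `V` orthogonal,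
`X = Qᵀ·Vᵀ`, `f = σ_min(X(1:r,1:r))`, and `A·Vᵀ = U·R` a QR decomposition, if
`σ_{r+1} < f·σ_r` then
`σ_{r+1} ≤ σ_max(R(r+1:n,r+1:n)) ≤ 3σ_{r+1}·f⁻⁴(σ₁/σ_r)³/(1 − σ_{r+1}²/(f²σ_r²))`. -/
theorem rurv_trailing_block_bound {n : ℕ} (r : ℕ) (hr1 : 1 ≤ r) (hrn : r < n)
    (A P Q V U R : Matrix (Fin n) (Fin n) ℝ) (σ : Fin n → ℝ)
    (hP : Pᵀ * P = 1) (hQ : Qᵀ * Q = 1) (hV : Vᵀ * V = 1) (hU : Uᵀ * U = 1)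
    (hσdec : Antitone σ) (hσ0 : ∀ i, 0 ≤ σ i)
    (hA : A = P * diagonal σ * Qᵀ)
    (hRtri : R.BlockTriangular id)
    (hQR : A * Vᵀ = U * R)
    (hgap : σ ⟨r, hrn⟩ <
      sigmaMin ((Qᵀ * Vᵀ).submatrix (Fin.castLE hrn.le) (Fin.castLE hrn.le)) *
        σ ⟨r - 1, by omega⟩) :
    let f := sigmaMin ((Qᵀ * Vᵀ).submatrix (Fin.castLE hrn.le) (Fin.castLE hrn.le))
    let R22 := R.submatrix
      (fun i : Fin (n - r) => (⟨r + i.val, by have := i.isLt; omega⟩ : Fin n))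
      (fun i : Fin (n - r) => (⟨r + i.val, by have := i.isLt; omega⟩ : Fin n))
    σ ⟨r, hrn⟩ ≤ sigmaMax R22 ∧
    sigmaMax R22 ≤ 3 * σ ⟨r, hrn⟩ *
      (f⁻¹ ^ 4 * (σ ⟨0, by omega⟩ / σ ⟨r - 1, by omega⟩) ^ 3) /
      (1 - σ ⟨r, hrn⟩ ^ 2 / (f ^ 2 * σ ⟨r - 1, by omega⟩ ^ 2)) := by
  intro f R22
  classical
  haveI : Nonempty (Fin r) := ⟨⟨0, by omega⟩⟩
  haveI : Nonempty (Fin (n - r)) := ⟨⟨0, by omega⟩⟩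
  set κ : Fin r → Fin n := Fin.castLE hrn.le with hκdef
  set ι : Fin (n - r) → Fin n :=
    (fun i : Fin (n - r) => (⟨r + i.val, by have := i.isLt; omega⟩ : Fin n)) with hιdef
  have hκinj : Function.Injective κ := Fin.castLE_injective _
  have hιinj : Function.Injective ι := by
    intro a b hab
    have := congrArg Fin.val hab
    simp only [hιdef] at this
    exact Fin.ext (by omega)
  -- orthogonality facts
  have hQQ : Q * Qᵀ = 1 := mul_eq_one_comm.mp hQ
  have hVV : V * Vᵀ = 1 := mul_eq_one_comm.mp hV
  have hUU : U * Uᵀ = 1 := mul_eq_one_comm.mp hU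
  have hQt : Qᵀᵀ * Qᵀ = 1 := by rw [transpose_transpose]; exact hQQ
  set X : Matrix (Fin n) (Fin n) ℝ := Qᵀ * Vᵀ with hXdef
  have hXo : Xᵀ * X = 1 := by
    rw [hXdef, transpose_mul, transpose_transpose, transpose_transpose, Matrix.mul_assoc,
      ← Matrix.mul_assoc Q Qᵀ Vᵀ, hQQ, Matrix.one_mul, hVV]
  set N : Matrix (Fin n) (Fin n) ℝ := Uᵀ * P with hNdef
  have hNo : Nᵀ * N = 1 := by
    rw [hNdef, transpose_mul, transpose_transpose, Matrix.mul_assoc,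
      ← Matrix.mul_assoc U Uᵀ P, hUU, Matrix.one_mul, hP]
  have hR : R = N * (diagonal σ * X) := by
    have h1 : R = Uᵀ * (A * Vᵀ) := by
      rw [hQR, ← Matrix.mul_assoc, hU, Matrix.one_mul]
    rw [h1, hA, hNdef, hXdef]
    simp only [Matrix.mul_assoc]
  -- block pieces of X
  set X11 := X.submatrix κ κ with hX11def
  set X12 := X.submatrix κ ι with hX12def
  set X21 := X.submatrix ι κ with hX21def
  set X22 := X.submatrix ι ι with hX22def
  have hfdef : f = sigmaMin X11 := rfl
  have hgap' : σ ⟨r, hrn⟩ < f * σ ⟨r - 1, by omega⟩ := hgap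
  have hσr : 0 ≤ σ ⟨r, hrn⟩ := hσ0 _
  have hσr1 : 0 ≤ σ ⟨r - 1, by omega⟩ := hσ0 _
  have hf0 : 0 ≤ f := sigmaMin_nonneg _
  have hfpos : 0 < f := by
    rcases hf0.eq_or_lt with h | h
    · exfalso; nlinarith
    · exact h
  have hσr1pos : 0 < σ ⟨r - 1, by omega⟩ := by
    rcases hσr1.eq_or_lt with h | h
    · exfalso; nlinarith
    · exact h
  -- X11 is invertible
  have hfmin : ∀ y : Fin r → ℝ, f * euclNorm y ≤ euclNorm (X11 *ᵥ y) := by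
    intro y; rw [hfdef]; exact sigmaMin_mulVec_le X11 y
  have hX11inj : Function.Injective (X11.mulVec) := by
    intro a b hab
    by_contra hne
    have h0 : X11 *ᵥ (a - b) = 0 := by rw [Matrix.mulVec_sub, hab, sub_self]
    have h1 : 0 < euclNorm (a - b) := euclNorm_pos (sub_ne_zero.mpr hne)
    have h2 := hfmin (a - b)
    rw [h0, euclNorm_zero] at h2
    nlinarith
  have hdet : IsUnit X11.det :=
    (Matrix.isUnit_iff_isUnit_det _).mp (Matrix.mulVec_injective_iff_isUnit.mp hX11inj)
  set Xi := X11⁻¹ with hXidef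
  have hinv1 : X11 * Xi = 1 := Matrix.mul_nonsing_inv _ hdet
  have hXi : ∀ y : Fin r → ℝ, euclNorm (Xi *ᵥ y) ≤ f⁻¹ * euclNorm y := by
    intro y
    have h1 := hfmin (Xi *ᵥ y)
    rw [Matrix.mulVec_mulVec, hinv1, Matrix.one_mulVec] at h1
    calc euclNorm (Xi *ᵥ y) = f⁻¹ * (f * euclNorm (Xi *ᵥ y)) := by field_simp
      _ ≤ f⁻¹ * euclNorm y := mul_le_mul_of_nonneg_left h1 (by positivity)
  -- the key structural identity
  set T := Xi * X12 with hTdef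
  set Sc := X22 - X21 * T with hScdef
  have hT : X11 * T = X12 := by rw [hTdef, ← Matrix.mul_assoc, hinv1, Matrix.one_mul]
  have hRapp : ∀ (i j : Fin n), R i j = ∑ p, N i p * (σ p * X p j) := by
    intro i j
    rw [hR, Matrix.mul_apply]
    exact Finset.sum_congr rfl fun p _ => by rw [Matrix.diagonal_mul]
  have hzero : ∀ (i : Fin (n - r)) (c : Fin r), ∑ p, N (ι i) p * (σ p * X p (κ c)) = 0 := by
    intro i c
    have hlt : (id (κ c) : Fin n) < id (ι i) := by
      simp only [id_eq, Fin.lt_def, hκdef, hιdef, Fin.coe_castLE]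
      omega
    have h := hRtri hlt
    rw [hRapp] at h
    exact h
  have hkey : R22 = N.submatrix ι ι * (diagonal (fun b => σ (ι b)) * Sc) := by
    ext i j
    show R (ι i) (ι j) = _
    have hrhs : (N.submatrix ι ι * (diagonal (fun b => σ (ι b)) * Sc)) i j
        = ∑ b, N (ι i) (ι b) * (σ (ι b) * Sc b j) := by
      rw [Matrix.mul_apply]
      exact Finset.sum_congr rfl fun b _ => by rw [Matrix.diagonal_mul]; rfl
    rw [hrhs, hRapp]
    have e1 : ∑ p, N (ι i) p * (σ p * X p (ι j))
        = (∑ p, N (ι i) p * (σ p * (X p (ι j) - ∑ c, X p (κ c) * T c j)))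
          + ∑ c, (∑ p, N (ι i) p * (σ p * X p (κ c))) * T c j := by
      have h2 : ∀ c, (∑ p, N (ι i) p * (σ p * X p (κ c))) * T c j
          = ∑ p, N (ι i) p * (σ p * X p (κ c)) * T c j := fun c => Finset.sum_mul _ _ _
      rw [Finset.sum_congr rfl fun c _ => h2 c, Finset.sum_comm, ← Finset.sum_add_distrib]
      apply Finset.sum_congr rfl
      intro p _
      have h3 : ∑ c, N (ι i) p * (σ p * X p (κ c)) * T c j
          = N (ι i) p * (σ p * ∑ c, X p (κ c) * T c j) := by
        rw [Finset.mul_sum, Finset.mul_sum]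
        exact Finset.sum_congr rfl fun c _ => by ring
      rw [h3]
      ring
    have e2 : ∑ c : Fin r, (∑ p, N (ι i) p * (σ p * X p (κ c))) * T c j = 0 :=
      Finset.sum_eq_zero fun c _ => by rw [hzero i c, zero_mul]
    rw [e1, e2, add_zero]
    rw [fin_sum_split hrn.le]
    have hκpart : ∑ a : Fin r,
        N (ι i) (κ a) * (σ (κ a) * (X (κ a) (ι j) - ∑ c, X (κ a) (κ c) * T c j)) = 0 := by
      apply Finset.sum_eq_zero
      intro a _
      have h4 : ∑ c, X (κ a) (κ c) * T c j = X (κ a) (ι j) := by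
        have := congrFun (congrFun hT a) j
        rw [Matrix.mul_apply] at this
        simpa [hX11def, hX12def] using this
      rw [h4, sub_self, mul_zero, mul_zero]
    rw [hκpart, zero_add]
    apply Finset.sum_congr rfl
    intro b _
    have h5 : X (ι b) (ι j) - ∑ c, X (ι b) (κ c) * T c j = Sc b j := by
      rw [hScdef, Matrix.sub_apply, Matrix.mul_apply]
      simp [hX21def, hX22def]
    rw [← h5]
  -- upper bound on the operator norm of R22
  have hub : sigmaMax R22 ≤ σ ⟨r, hrn⟩ * (1 + f⁻¹) := by
    apply sigmaMax_le
    intro x hx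
    have hRx : R22 *ᵥ x = N.submatrix ι ι *ᵥ (diagonal (fun b => σ (ι b)) *ᵥ (Sc *ᵥ x)) := by
      rw [hkey, ← Matrix.mulVec_mulVec, ← Matrix.mulVec_mulVec]
    rw [hRx]
    have hScx : euclNorm (Sc *ᵥ x) ≤ 1 + f⁻¹ := by
      have hsub : Sc *ᵥ x = X22 *ᵥ x - X21 *ᵥ (Xi *ᵥ (X12 *ᵥ x)) := by
        rw [hScdef, Matrix.sub_mulVec, hTdef, ← Matrix.mul_assoc, ← Matrix.mulVec_mulVec,
          ← Matrix.mulVec_mulVec]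
      rw [hsub]
      have h1 : euclNorm (X22 *ᵥ x) ≤ 1 := by
        have := euclNorm_submatrix_mulVec_le hXo hιinj hιinj x
        rwa [hx] at this
      have h2 : euclNorm (X21 *ᵥ (Xi *ᵥ (X12 *ᵥ x))) ≤ f⁻¹ := by
        have h3 : euclNorm (X12 *ᵥ x) ≤ 1 := by
          have := euclNorm_submatrix_mulVec_le hXo hκinj hιinj x
          rwa [hx] at this
        have h4 : euclNorm (Xi *ᵥ (X12 *ᵥ x)) ≤ f⁻¹ :=
          le_trans (hXi _) (by
            have := mul_le_mul_of_nonneg_left h3 (le_of_lt (inv_pos.2 hfpos))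
            linarith)
        exact le_trans (euclNorm_submatrix_mulVec_le hXo hιinj hκinj _) h4
      calc euclNorm (X22 *ᵥ x - X21 *ᵥ (Xi *ᵥ (X12 *ᵥ x)))
          ≤ euclNorm (X22 *ᵥ x) + euclNorm (X21 *ᵥ (Xi *ᵥ (X12 *ᵥ x))) := euclNorm_sub_le _ _
        _ ≤ 1 + f⁻¹ := add_le_add h1 h2
    calc euclNorm (N.submatrix ι ι *ᵥ (diagonal (fun b => σ (ι b)) *ᵥ (Sc *ᵥ x)))
        ≤ euclNorm (diagonal (fun b => σ (ι b)) *ᵥ (Sc *ᵥ x)) :=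
          euclNorm_submatrix_mulVec_le hNo hιinj hιinj _
      _ ≤ σ ⟨r, hrn⟩ * euclNorm (Sc *ᵥ x) := by
          apply euclNorm_diagonal_mulVec_le hσr
          intro b
          rw [abs_of_nonneg (hσ0 _)]
          apply hσdec
          rw [Fin.le_def, hιdef]
          simp
      _ ≤ σ ⟨r, hrn⟩ * (1 + f⁻¹) := mul_le_mul_of_nonneg_left hScx hσr
  -- f ≤ 1
  have hf1 : f ≤ 1 := by
    set u0 : Fin r → ℝ := fun j => if j = Classical.arbitrary (Fin r) then (1:ℝ) else 0 with hu0
    have h1 : f ≤ euclNorm (X11 *ᵥ u0) := by rw [hfdef]; exact sigmaMin_le _ (euclNorm_unit _)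
    have h2 : euclNorm (X11 *ᵥ u0) ≤ 1 := by
      have := euclNorm_submatrix_mulVec_le hXo hκinj hκinj u0
      rwa [euclNorm_unit] at this
    linarith
  constructor
  · -- lower bound
    rcases hσr.eq_or_lt with hz | hpos
    · rw [← hz]
      exact le_trans (euclNorm_nonneg _)
        (le_sigmaMax R22 (euclNorm_unit (Classical.arbitrary (Fin (n - r)))))
    · -- subspace intersection argument
      set φ : (Fin n → ℝ) →ₗ[ℝ] (Fin r → ℝ) :=
        (LinearMap.funLeft ℝ ℝ κ).comp (Matrix.mulVecLin (R * V)) with hφdef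
      set ρ : Fin (n - r - 1) → Fin n :=
        (fun i => ⟨r + 1 + i.val, by have := i.isLt; omega⟩) with hρdef
      set ψ : (Fin n → ℝ) →ₗ[ℝ] (Fin (n - r - 1) → ℝ) :=
        (LinearMap.funLeft ℝ ℝ ρ).comp (Matrix.mulVecLin Qᵀ) with hψdef
      have hn : Module.finrank ℝ (Fin n → ℝ) = n := Module.finrank_fin_fun ℝ
      have hk1 : n - r ≤ Module.finrank ℝ (LinearMap.ker φ) := by
        have h1 := LinearMap.finrank_range_add_finrank_ker φ
        have h2 : Module.finrank ℝ (LinearMap.range φ) ≤ r :=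
          le_trans (Submodule.finrank_le _) (Module.finrank_fin_fun ℝ).le
        rw [hn] at h1
        omega
      have hk2 : r + 1 ≤ Module.finrank ℝ (LinearMap.ker ψ) := by
        have h1 := LinearMap.finrank_range_add_finrank_ker ψ
        have h2 : Module.finrank ℝ (LinearMap.range ψ) ≤ n - r - 1 :=
          le_trans (Submodule.finrank_le _) (Module.finrank_fin_fun ℝ).le
        rw [hn] at h1
        omega
      have hint : 1 ≤ Module.finrank ℝ
          ((LinearMap.ker φ ⊓ LinearMap.ker ψ : Submodule ℝ (Fin n → ℝ)) : Submodule ℝ (Fin n → ℝ)) := by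
        have h3 := Submodule.finrank_sup_add_finrank_inf_eq (LinearMap.ker φ) (LinearMap.ker ψ)
        have h4 : Module.finrank ℝ
            ((LinearMap.ker φ ⊔ LinearMap.ker ψ : Submodule ℝ (Fin n → ℝ))) ≤ n :=
          le_trans (Submodule.finrank_le _) hn.le
        omega
      have hne : (LinearMap.ker φ ⊓ LinearMap.ker ψ : Submodule ℝ (Fin n → ℝ)) ≠ ⊥ := by
        intro hbot
        rw [hbot, finrank_bot] at hint
        omega
      obtain ⟨v, hv, hv0⟩ := Submodule.exists_mem_ne_zero_of_ne_bot hne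
      obtain ⟨hv1, hv2⟩ := Submodule.mem_inf.mp hv
      have hvn : 0 < euclNorm v := euclNorm_pos hv0
      set v' := (euclNorm v)⁻¹ • v with hv'def
      have hv'1 : euclNorm v' = 1 := by
        rw [hv'def, euclNorm_smul, abs_of_pos (inv_pos.2 hvn), inv_mul_cancel₀ hvn.ne']
      set w := V *ᵥ v' with hwdef
      have hφv : ∀ a : Fin r, (R *ᵥ w) (κ a) = 0 := by
        intro a
        have h0 : φ v = 0 := LinearMap.mem_ker.mp hv1
        have h1 : ((R * V) *ᵥ v) (κ a) = 0 := congrFun h0 a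
        rw [hwdef, hv'def, Matrix.mulVec_smul, Matrix.mulVec_smul, Matrix.mulVec_mulVec]
        simp [h1]
      have hψv : ∀ i : Fin (n - r - 1), (Qᵀ *ᵥ v') (ρ i) = 0 := by
        intro i
        have h0 : ψ v = 0 := LinearMap.mem_ker.mp hv2
        have h1 : (Qᵀ *ᵥ v) (ρ i) = 0 := congrFun h0 i
        rw [hv'def, Matrix.mulVec_smul]
        simp [h1]
      set u := Qᵀ *ᵥ v' with hudef
      have hu1 : euclNorm u = 1 := by rw [hudef, euclNorm_mulVec_orth hQt, hv'1]
      have husum : ∑ p, u p ^ 2 = 1 := by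
        rw [← sq_euclNorm, hu1, one_pow]
      have hlow : σ ⟨r, hrn⟩ ≤ euclNorm (diagonal σ *ᵥ u) := by
        rw [euclNorm_eq]
        have hterm : ∀ p : Fin n, σ ⟨r, hrn⟩ ^ 2 * u p ^ 2 ≤ (diagonal σ *ᵥ u) p ^ 2 := by
          intro p
          rw [Matrix.mulVec_diagonal]
          by_cases hp : p.val ≤ r
          · have h1 : σ ⟨r, hrn⟩ ≤ σ p := hσdec (by rw [Fin.le_def]; simpa using hp)
            have h2 : σ ⟨r, hrn⟩ ^ 2 ≤ σ p ^ 2 := by nlinarith [hσ0 p]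
            nlinarith [mul_le_mul_of_nonneg_right h2 (sq_nonneg (u p))]
          · have hup : u p = 0 := by
              have hpe : p = ρ ⟨p.val - r - 1, by omega⟩ := Fin.ext (by simp [hρdef]; omega)
              rw [hpe]
              exact hψv _
            rw [hup]
            simp
        calc σ ⟨r, hrn⟩ = Real.sqrt (σ ⟨r, hrn⟩ ^ 2) := (Real.sqrt_sq hσr).symm
          _ ≤ Real.sqrt (∑ p, (diagonal σ *ᵥ u) p ^ 2) := by
              apply Real.sqrt_le_sqrt
              have hs : σ ⟨r, hrn⟩ ^ 2 = σ ⟨r, hrn⟩ ^ 2 * ∑ p, u p ^ 2 := by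
                rw [husum, mul_one]
              rw [hs, Finset.mul_sum]
              exact Finset.sum_le_sum fun p _ => hterm p
      have hAv : euclNorm (diagonal σ *ᵥ u) = euclNorm (R *ᵥ w) := by
        have h1 : A *ᵥ v' = P *ᵥ (diagonal σ *ᵥ u) := by
          rw [hA, hudef, Matrix.mulVec_mulVec, Matrix.mulVec_mulVec]
        have hAA : U * R * V = A := by rw [← hQR, Matrix.mul_assoc, hV, Matrix.mul_one]
        have h2 : A *ᵥ v' = U *ᵥ (R *ᵥ w) := by
          rw [← hAA, hwdef, Matrix.mulVec_mulVec, Matrix.mulVec_mulVec]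
        calc euclNorm (diagonal σ *ᵥ u) = euclNorm (P *ᵥ (diagonal σ *ᵥ u)) :=
              (euclNorm_mulVec_orth hP _).symm
          _ = euclNorm (U *ᵥ (R *ᵥ w)) := by rw [← h1, h2]
          _ = euclNorm (R *ᵥ w) := euclNorm_mulVec_orth hU _
      set w2 := (fun b : Fin (n - r) => w (ι b)) with hw2def
      have hsplit : euclNorm (R *ᵥ w) = euclNorm (R22 *ᵥ w2) := by
        rw [euclNorm_eq, euclNorm_eq]
        congr 1
        rw [fin_sum_split hrn.le]
        have hz1 : ∑ a : Fin r, (R *ᵥ w) (Fin.castLE hrn.le a) ^ 2 = 0 :=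
          Finset.sum_eq_zero fun a _ => by rw [hφv a]; ring
        have hz2 : ∀ b : Fin (n - r),
            (R *ᵥ w) (⟨r + b.val, by have := b.isLt; omega⟩ : Fin n) = (R22 *ᵥ w2) b := by
          intro b
          show ∑ p, R (ι b) p * w p = _
          rw [fin_sum_split hrn.le (fun p => R (ι b) p * w p)]
          have hz3 : ∑ a : Fin r, R (ι b) (κ a) * w (κ a) = 0 :=
            Finset.sum_eq_zero fun a _ => by
              rw [hRtri (show (id (κ a) : Fin n) < id (ι b) by
                simp only [id_eq, Fin.lt_def, hκdef, hιdef, Fin.coe_castLE]; omega)]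
              ring
          rw [hz3, zero_add]
          rfl
        rw [hz1, zero_add]
        exact Finset.sum_congr rfl fun b _ => by rw [hz2 b]
      have hRw2 : σ ⟨r, hrn⟩ ≤ euclNorm (R22 *ᵥ w2) := by
        rw [← hsplit, ← hAv]
        exact hlow
      have hw2le : euclNorm w2 ≤ 1 := by
        have h1 : euclNorm w = 1 := by rw [hwdef, euclNorm_mulVec_orth hV, hv'1]
        calc euclNorm w2 ≤ euclNorm w := euclNorm_comp_le hιinj w
          _ = 1 := h1
      have hw2ne : w2 ≠ 0 := by
        intro h0
        rw [h0, Matrix.mulVec_zero, euclNorm_zero] at hRw2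
        linarith
      have hw2pos : 0 < euclNorm w2 := euclNorm_pos hw2ne
      have hx1 : euclNorm ((euclNorm w2)⁻¹ • w2) = 1 := by
        rw [euclNorm_smul, abs_of_pos (inv_pos.2 hw2pos), inv_mul_cancel₀ hw2pos.ne']
      have hfin := le_sigmaMax R22 hx1
      have heq : euclNorm (R22 *ᵥ ((euclNorm w2)⁻¹ • w2))
          = (euclNorm w2)⁻¹ * euclNorm (R22 *ᵥ w2) := by
        rw [Matrix.mulVec_smul, euclNorm_smul, abs_of_pos (inv_pos.2 hw2pos)]
      have hinvge : 1 ≤ (euclNorm w2)⁻¹ := by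
        have h := mul_le_mul_of_nonneg_left hw2le (le_of_lt (inv_pos.2 hw2pos))
        rwa [inv_mul_cancel₀ hw2pos.ne', mul_one] at h
      calc σ ⟨r, hrn⟩ ≤ euclNorm (R22 *ᵥ w2) := hRw2
        _ ≤ (euclNorm w2)⁻¹ * euclNorm (R22 *ᵥ w2) :=
            le_mul_of_one_le_left (euclNorm_nonneg _) hinvge
        _ = euclNorm (R22 *ᵥ ((euclNorm w2)⁻¹ • w2)) := heq.symm
        _ ≤ sigmaMax R22 := le_sigmaMax R22 hx1
  · -- final arithmetic for the upper bound
    exact arith_bound _ _ _ f _ hσr hσr1pos hgap' hfpos hf1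
      (hσdec (Fin.mk_le_mk.mpr (by omega))) hub
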